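/- Let 0 → A → E →^β B → 0 be a non-abelian extension of associative conformal algebras with 2-cocycle (▶,◀,χ) determined by a section γ. A pair (g,h) ∈ Aut(A) × Aut(B) is inducible (i.e., there exists f ∈ Aut(E) with f(A) = A, f|_A = g and β∘f∘γ = h) if and only if there exists a k[∂]-module map ω: B → A such that for all a ∈ A, b, b₁, b₂ ∈ B: g(b ▶λ a) = h(b) ▶λ g(a) − ω(h(b)) λ g(a); g(a ◀λ b) = g(a) ◀λ h(b) − g(a) λ ω(h(b)); and g(χ_λ(b₁,b₂)) = χ_λ(h(b₁),h(b₂)) − h(b₁) ▶λ ω(h(b₂)) + ω(h(b₁) λ h(b₂)) − ω(h(b₁)) ◀λ h(b₂) + ω(h(b₁)) λ ω(h(b₂)). -/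
import Mathlib


structure AssocConformalAlg (k : Type*) [Field k] (A : Type*) [AddCommGroup A] [Module k A] where
  D : A →ₗ[k] A
  mul : k → A →ₗ[k] A →ₗ[k] A
  conf_left : ∀ (l : k) (a b : A), mul l (D a) b = -(l • mul l a b)
  conf_right : ∀ (l : k) (a b : A), mul l a (D b) = D (mul l a b) + l • mul l a b
  assoc : ∀ (l m : k) (a b c : A), mul (l + m) (mul l a b) c = mul l a (mul m b c)

structure IsNonAbel2Cocycle {k : Type*} [Field k] {A B : Type*}
    [AddCommGroup A] [Module k A] [AddCommGroup B] [Module k B]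
    (SA : AssocConformalAlg k A) (SB : AssocConformalAlg k B)
    (lact : k → B →ₗ[k] A →ₗ[k] A) (ract : k → A →ₗ[k] B →ₗ[k] A)
    (chi : k → B →ₗ[k] B →ₗ[k] A) : Prop where
  lact_DB : ∀ l b a, lact l (SB.D b) a = -(l • lact l b a)
  lact_DA : ∀ l b a, lact l b (SA.D a) = SA.D (lact l b a) + l • lact l b a
  ract_DA : ∀ l a b, ract l (SA.D a) b = -(l • ract l a b)
  ract_DB : ∀ l a b, ract l a (SB.D b) = SA.D (ract l a b) + l • ract l a b
  chi_DB1 : ∀ l b1 b2, chi l (SB.D b1) b2 = -(l • chi l b1 b2)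
  chi_DB2 : ∀ l b1 b2, chi l b1 (SB.D b2) = SA.D (chi l b1 b2) + l • chi l b1 b2
  coh1 : ∀ l m b1 b2 a, lact l b1 (lact m b2 a)
      = lact (l + m) (SB.mul l b1 b2) a + SA.mul (l + m) (chi l b1 b2) a
  coh2 : ∀ l m a b1 b2, ract (l + m) (ract l a b1) b2
      = ract l a (SB.mul m b1 b2) + SA.mul l a (chi m b1 b2)
  coh3 : ∀ l m b1 a b2, lact l b1 (ract m a b2) = ract (l + m) (lact l b1 a) b2
  coh4 : ∀ l m a1 a2 b, ract (l + m) (SA.mul l a1 a2) b = SA.mul l a1 (ract m a2 b)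
  coh4' : ∀ l m b a1 a2, lact l b (SA.mul m a1 a2) = SA.mul (l + m) (lact l b a1) a2
  coh4'' : ∀ l m a1 b a2, SA.mul (l + m) (ract l a1 b) a2 = SA.mul l a1 (lact m b a2)
  coh5 : ∀ l m b1 b2 b3, lact l b1 (chi m b2 b3) + chi (l + m) b1 (SB.mul m b2 b3)
      = chi (l + m) (SB.mul l b1 b2) b3 + ract (l + m) (chi l b1 b2) b3

/-- An automorphism of an associative conformal algebra: a `k[∂]`-module automorphism
preserving the λ-product. -/
def IsConfAut {k : Type*} [Field k] {E : Type*} [AddCommGroup E] [Module k E]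
    (S : AssocConformalAlg k E) (f : E ≃ₗ[k] E) : Prop :=
  (∀ x, f (S.D x) = S.D (f x)) ∧ ∀ (l : k) (x y : E), f (S.mul l x y) = S.mul l (f x) (f y)

/-- Inducibility criterion: `(g,h)` is inducible iff there is `ω : B → A` (a
`k[∂]`-module map) satisfying the three compatibility equations. -/
theorem stmt_16 (k : Type*) [Field k] [IsAlgClosed k] [CharZero k]
    (A B : Type*) [AddCommGroup A] [Module k A] [AddCommGroup B] [Module k B]
    (SA : AssocConformalAlg k A) (SB : AssocConformalAlg k B)
    (lact : k → B →ₗ[k] A →ₗ[k] A) (ract : k → A →ₗ[k] B →ₗ[k] A)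
    (chi : k → B →ₗ[k] B →ₗ[k] A)
    (hc : IsNonAbel2Cocycle SA SB lact ract chi)
    (S : AssocConformalAlg k (A × B))
    (hSD : ∀ p : A × B, S.D p = (SA.D p.1, SB.D p.2))
    (hSm : ∀ (l : k) (p q : A × B),
      S.mul l p q = (SA.mul l p.1 q.1 + lact l p.2 q.1 + ract l p.1 q.2 + chi l p.2 q.2,
        SB.mul l p.2 q.2))
    (g : A ≃ₗ[k] A) (h : B ≃ₗ[k] B)
    (hg : IsConfAut SA g) (hh : IsConfAut SB h) :
    (∃ f : (A × B) ≃ₗ[k] (A × B), IsConfAut S f ∧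
        (∀ a : A, f (a, (0 : B)) = (g a, (0 : B))) ∧
        (∀ b : B, (f ((0 : A), b)).2 = h b)) ↔
    (∃ ω : B →ₗ[k] A, (∀ b, ω (SB.D b) = SA.D (ω b)) ∧
      (∀ (l : k) (b : B) (a : A),
        g (lact l b a) = lact l (h b) (g a) - SA.mul l (ω (h b)) (g a)) ∧
      (∀ (l : k) (a : A) (b : B),
        g (ract l a b) = ract l (g a) (h b) - SA.mul l (g a) (ω (h b))) ∧
      (∀ (l : k) (b1 b2 : B),
        g (chi l b1 b2)
          = chi l (h b1) (h b2) - lact l (h b1) (ω (h b2))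
            + ω (SB.mul l (h b1) (h b2)) - ract l (ω (h b1)) (h b2)
            + SA.mul l (ω (h b1)) (ω (h b2)))) := by
  constructor
  · rintro ⟨f, hf, hfA, hfB⟩
    set φ : B →ₗ[k] A :=
      (LinearMap.fst k A B) ∘ₗ f.toLinearMap ∘ₗ (LinearMap.inr k A B) with hφdef
    have hφ_apply : ∀ b : B, φ b = (f (0, b)).1 := fun b => rfl
    have hf0 : ∀ b : B, f (0, b) = (φ b, h b) := by
      intro b
      exact Prod.ext (hφ_apply b).symm (hfB b)
    refine ⟨-(φ ∘ₗ h.symm.toLinearMap), ?_, ?_, ?_, ?_⟩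
    · -- D compatibility
      intro b
      have hφD : ∀ c : B, φ (SB.D c) = SA.D (φ c) := by
        intro c
        have H := hf.1 (0, c)
        rw [hSD, hSD] at H
        simp only [map_zero] at H
        rw [hf0, hf0] at H
        have := congrArg Prod.fst H
        simpa using this
      have hs : h.symm (SB.D b) = SB.D (h.symm b) := by
        apply h.injective
        rw [hh.1]
        simp
      simp [hs, hφD]
    · -- equation 1
      intro l b a
      have H := hf.2 l (0, b) (a, 0)
      rw [hSm, hSm] at H
      simp only [map_zero, LinearMap.map_zero, LinearMap.zero_apply, add_zero,
        zero_add] at H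
      rw [hf0, hfA] at H
      simp only [map_zero, LinearMap.map_zero, LinearMap.zero_apply, add_zero,
        zero_add] at H
      rw [hfA] at H
      have H1 := congrArg Prod.fst H
      simp only [map_zero, LinearMap.map_zero, add_zero, LinearMap.zero_apply, zero_add] at H1
      rw [H1]
      simp only [LinearMap.neg_apply, LinearMap.comp_apply, LinearEquiv.coe_coe,
        LinearEquiv.symm_apply_apply, map_neg, LinearMap.map_neg, map_zero,
        LinearMap.map_zero, add_zero]
      abel
    · -- equation 2
      intro l a b
      have H := hf.2 l (a, 0) (0, b)
      rw [hSm, hSm] at H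
      simp only [map_zero, LinearMap.map_zero, LinearMap.zero_apply, add_zero,
        zero_add] at H
      rw [hf0, hfA] at H
      simp only [map_zero, LinearMap.map_zero, LinearMap.zero_apply, add_zero,
        zero_add] at H
      rw [hfA] at H
      have H1 := congrArg Prod.fst H
      simp only [map_zero, LinearMap.map_zero, add_zero, zero_add, LinearMap.zero_apply] at H1
      rw [H1]
      simp only [LinearMap.neg_apply, LinearMap.comp_apply, LinearEquiv.coe_coe,
        LinearEquiv.symm_apply_apply, map_neg, LinearMap.map_neg, map_zero,
        LinearMap.map_zero, add_zero, zero_add]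
      abel
    · -- equation 3
      intro l b1 b2
      have H := hf.2 l (0, b1) (0, b2)
      rw [hSm, hSm] at H
      simp only [map_zero, LinearMap.map_zero, LinearMap.zero_apply, add_zero,
        zero_add] at H
      have hfsplit : ∀ (x : A) (y : B), f (x, y) = (g x + φ y, h y) := by
        intro x y
        have hxy : (x, y) = ((x, (0 : B)) + ((0 : A), y)) := by simp
        rw [hxy, map_add, hfA, hf0]
        simp
      rw [hf0, hf0, hfsplit] at H
      have H1 := congrArg Prod.fst H
      simp only at H1
      have hsm : h.symm (SB.mul l (h b1) (h b2)) = SB.mul l b1 b2 := by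
        apply h.injective
        rw [hh.2]
        simp
      have H2 : g (chi l b1 b2)
          = SA.mul l (φ b1) (φ b2) + lact l (h b1) (φ b2) + ract l (φ b1) (h b2)
            + chi l (h b1) (h b2) - φ (SB.mul l b1 b2) := by
        rw [← H1]; abel
      rw [H2]
      simp only [LinearMap.neg_apply, LinearMap.comp_apply, LinearEquiv.coe_coe,
        LinearEquiv.symm_apply_apply, hsm, map_neg, LinearMap.map_neg,
        LinearMap.neg_apply, neg_neg]
      abel
  · rintro ⟨ω, hωD, he1, he2, he3⟩
    set F : (A × B) →ₗ[k] (A × B) :=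
      ((g.toLinearMap ∘ₗ LinearMap.fst k A B)
        - (ω ∘ₗ h.toLinearMap ∘ₗ LinearMap.snd k A B)).prod
        (h.toLinearMap ∘ₗ LinearMap.snd k A B) with hFdef
    set G : (A × B) →ₗ[k] (A × B) :=
      (g.symm.toLinearMap ∘ₗ (LinearMap.fst k A B + ω ∘ₗ LinearMap.snd k A B)).prod
        (h.symm.toLinearMap ∘ₗ LinearMap.snd k A B) with hGdef
    have hFapp : ∀ p : A × B, F p = (g p.1 - ω (h p.2), h p.2) := by
      intro p; simp [hFdef]
    have hGapp : ∀ p : A × B, G p = (g.symm (p.1 + ω p.2), h.symm p.2) := by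
      intro p; simp [hGdef]
    refine ⟨LinearEquiv.ofLinear F G ?_ ?_, ⟨?_, ?_⟩, ?_, ?_⟩
    · apply LinearMap.ext; intro p
      simp [hFapp, hGapp]
    · apply LinearMap.ext; intro p
      simp [hFapp, hGapp]
    · -- D compatibility of f
      intro p
      simp only [LinearEquiv.ofLinear_apply, hFapp, hSD]
      refine Prod.ext ?_ (hh.1 p.2)
      simp only [hg.1, hh.1, hωD, map_sub]
    · -- multiplication compatibility
      intro l p q
      simp only [LinearEquiv.ofLinear_apply, hFapp, hSm]
      refine Prod.ext ?_ (hh.2 l p.2 q.2)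
      simp only [map_add, map_sub, LinearMap.map_sub, LinearMap.sub_apply,
        hg.2, he1, he2, he3, hh.2]
      abel
    · intro a
      simp only [LinearEquiv.ofLinear_apply, hFapp]
      simp
    · intro b
      simp only [LinearEquiv.ofLinear_apply, hFapp]
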